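/- Let b : X → ℝ, and let χ, χ₀, χ₁ be differentiable at every point of s, each satisfying (L·)(x) + q(x)·(·)(x) = b(x) for all x ∈ s, with χ₁(x) ≠ χ₀(x) for all x ∈ s. Then the ratio φ(x) = (χ(x) − χ₀(x)) / (χ₁(x) − χ₀(x)) satisfies the homogeneous equation (Lφ)(x) = 0 for all x ∈ s. -/

import Mathlib

/-- If χ, χ₀, χ₁ solve (L+q)·= b on s and χ₁ − χ₀ is nonvanishing on s,
then (χ − χ₀)/(χ₁ − χ₀) solves the homogeneous equation on s. -/
theorem ratio_of_solution_differences_homogeneous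
    {X : Type*} [NormedAddCommGroup X] [NormedSpace ℝ X]
    (s : Set X) (hs : IsOpen s) (a : X → X) (q b : X → ℝ) (χ χ₀ χ₁ : X → ℝ)
    (hχd : ∀ x ∈ s, DifferentiableAt ℝ χ x)
    (hχ₀d : ∀ x ∈ s, DifferentiableAt ℝ χ₀ x)
    (hχ₁d : ∀ x ∈ s, DifferentiableAt ℝ χ₁ x)
    (hχeq : ∀ x ∈ s, fderiv ℝ χ x (a x) + q x * χ x = b x)
    (hχ₀eq : ∀ x ∈ s, fderiv ℝ χ₀ x (a x) + q x * χ₀ x = b x)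
    (hχ₁eq : ∀ x ∈ s, fderiv ℝ χ₁ x (a x) + q x * χ₁ x = b x)
    (hne : ∀ x ∈ s, χ₁ x ≠ χ₀ x) :
    ∀ x ∈ s,
      fderiv ℝ (fun y => (χ y - χ₀ y) / (χ₁ y - χ₀ y)) x (a x) = 0 := by
  intro x hx
  have hvne : χ₁ x - χ₀ x ≠ 0 := sub_ne_zero.mpr (hne x hx)
  have hu : HasFDerivAt (fun y => χ y - χ₀ y)
      (fderiv ℝ χ x - fderiv ℝ χ₀ x) x :=
    (hχd x hx).hasFDerivAt.sub (hχ₀d x hx).hasFDerivAt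
  have hv : HasFDerivAt (fun y => χ₁ y - χ₀ y)
      (fderiv ℝ χ₁ x - fderiv ℝ χ₀ x) x :=
    (hχ₁d x hx).hasFDerivAt.sub (hχ₀d x hx).hasFDerivAt
  have hinv : HasFDerivAt (fun y => (χ₁ y - χ₀ y)⁻¹)
      ((-ContinuousLinearMap.mulLeftRight ℝ ℝ (χ₁ x - χ₀ x)⁻¹ (χ₁ x - χ₀ x)⁻¹).comp
        (fderiv ℝ χ₁ x - fderiv ℝ χ₀ x)) x :=
    (hasFDerivAt_inv' hvne).comp x hv
  have hmul := hu.mul hinv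
  have hfun : (fun y => (χ y - χ₀ y) / (χ₁ y - χ₀ y)) =
      fun y => (χ y - χ₀ y) * (χ₁ y - χ₀ y)⁻¹ := by
    funext y; rw [div_eq_mul_inv]
  rw [hfun, HasFDerivAt.fderiv (f := fun y => (χ y - χ₀ y) * (χ₁ y - χ₀ y)⁻¹) hmul]
  have h1 : (fderiv ℝ χ x - fderiv ℝ χ₀ x) (a x) = -(q x) * (χ x - χ₀ x) := by
    have e1 := hχeq x hx
    have e0 := hχ₀eq x hx
    simp only [ContinuousLinearMap.sub_apply]
    ring_nf
    nlinarith [e1, e0]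
  have h2 : (fderiv ℝ χ₁ x - fderiv ℝ χ₀ x) (a x) = -(q x) * (χ₁ x - χ₀ x) := by
    have e1 := hχ₁eq x hx
    have e0 := hχ₀eq x hx
    simp only [ContinuousLinearMap.sub_apply]
    ring_nf
    nlinarith [e1, e0]
  simp only [ContinuousLinearMap.add_apply, ContinuousLinearMap.smul_apply,
    ContinuousLinearMap.comp_apply, ContinuousLinearMap.neg_apply,
    ContinuousLinearMap.mulLeftRight_apply, h1, h2, smul_eq_mul]
  field_simp
  ring
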